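/- The envelope-area score is submodular on nonempty subsets: for any finite set T of time series, any nonempty subsets W ⊆ U ⊆ T, and any t ∈ T, one has Score₁(U ∪ {t}) − Score₁(U) ≤ Score₁(W ∪ {t}) − Score₁(W). -/

import Mathlib

open Finset
open scoped Classical

/-- The envelope-area score of a finite set `U` of time series over a finite domain `D`:
`Score₁(U) = ∑_{i ∈ D} (max_{t ∈ U} t(i) − min_{t ∈ U} t(i))`. -/
noncomputable def score1 {D : Type*} [Fintype D] (U : Finset (D → ℝ)) : ℝ :=
  ∑ i : D, (sSup ((fun f => f i) '' (U : Set (D → ℝ))) -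
            sInf ((fun f => f i) '' (U : Set (D → ℝ))))

lemma sSup_coe_eq_max' (s : Finset ℝ) (hs : s.Nonempty) :
    sSup (s : Set ℝ) = s.max' hs := by
  exact hs.csSup_eq_max'

lemma sInf_coe_eq_min' (s : Finset ℝ) (hs : s.Nonempty) :
    sInf (s : Set ℝ) = s.min' hs := by
  exact hs.csInf_eq_min'

/-- The envelope-area score is submodular on nonempty subsets: for any finite set `T` of
time series, any nonempty subsets `W ⊆ U ⊆ T` and any `t ∈ T`,
`Score₁(U ∪ {t}) − Score₁(U) ≤ Score₁(W ∪ {t}) − Score₁(W)`. -/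
theorem score1_submodular {D : Type*} [Fintype D] [Nonempty D]
    (T U W : Finset (D → ℝ)) (t : D → ℝ)
    (hW : W.Nonempty) (hWU : W ⊆ U) (hUT : U ⊆ T) (ht : t ∈ T) :
    score1 (insert t U) - score1 U ≤ score1 (insert t W) - score1 W := by
  have hU : U.Nonempty := hW.mono hWU
  unfold score1
  rw [← Finset.sum_sub_distrib, ← Finset.sum_sub_distrib]
  apply Finset.sum_le_sum
  intro i _
  have himg : ∀ (s : Finset (D → ℝ)), (fun f => f i) '' (s : Set (D → ℝ)) =
      ((s.image (fun f => f i) : Finset ℝ) : Set ℝ) := by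
    intro s; rw [Finset.coe_image]
  rw [himg, himg, himg, himg]
  have hWi : (W.image (fun f => f i)).Nonempty := hW.image _
  have hUi : (U.image (fun f => f i)).Nonempty := hU.image _
  have hWti : ((insert t W).image (fun f => f i)).Nonempty := (Finset.insert_nonempty t W).image _
  have hUti : ((insert t U).image (fun f => f i)).Nonempty := (Finset.insert_nonempty t U).image _
  rw [sSup_coe_eq_max' _ hWi, sInf_coe_eq_min' _ hWi,
      sSup_coe_eq_max' _ hUi, sInf_coe_eq_min' _ hUi,
      sSup_coe_eq_max' _ hWti, sInf_coe_eq_min' _ hWti,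
      sSup_coe_eq_max' _ hUti, sInf_coe_eq_min' _ hUti]
  have hiW : (insert t W).image (fun f => f i) = insert (t i) (W.image (fun f => f i)) :=
    Finset.image_insert _ _ _
  have hiU : (insert t U).image (fun f => f i) = insert (t i) (U.image (fun f => f i)) :=
    Finset.image_insert _ _ _
  have hmaxW : ((insert t W).image (fun f => f i)).max' hWti
      = max ((W.image (fun f => f i)).max' hWi) (t i) := by
    simp only [hiW]; exact (Finset.max'_insert _ _ hWi).trans (max_comm _ _)
  have hmaxU : ((insert t U).image (fun f => f i)).max' hUti
      = max ((U.image (fun f => f i)).max' hUi) (t i) := by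
    simp only [hiU]; exact (Finset.max'_insert _ _ hUi).trans (max_comm _ _)
  have hminW : ((insert t W).image (fun f => f i)).min' hWti
      = min ((W.image (fun f => f i)).min' hWi) (t i) := by
    simp only [hiW]; exact (Finset.min'_insert _ _ hWi).trans (min_comm _ _)
  have hminU : ((insert t U).image (fun f => f i)).min' hUti
      = min ((U.image (fun f => f i)).min' hUi) (t i) := by
    simp only [hiU]; exact (Finset.min'_insert _ _ hUi).trans (min_comm _ _)
  rw [hmaxW, hmaxU, hminW, hminU]
  have hm : (U.image (fun f => f i)).min' hUi ≤ (W.image (fun f => f i)).min' hWi :=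
    Finset.min'_subset _ (Finset.image_subset_image hWU)
  have hM : (W.image (fun f => f i)).max' hWi ≤ (U.image (fun f => f i)).max' hUi :=
    Finset.max'_subset _ (Finset.image_subset_image hWU)
  set a := t i
  set mw := (W.image (fun f => f i)).min' hWi
  set Mw := (W.image (fun f => f i)).max' hWi
  set mu := (U.image (fun f => f i)).min' hUi
  set Mu := (U.image (fun f => f i)).max' hUi
  have h1 : max Mu a - Mu ≤ max Mw a - Mw := by
    rcases le_total a Mw with h | h
    · simp [max_eq_left h, max_eq_left (h.trans hM)]
    · rcases le_total a Mu with h2 | h2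
      · simp [max_eq_left h2, max_eq_right h]; linarith
      · simp [max_eq_right h, max_eq_right h2]; linarith
  have h2 : mu - min mu a ≤ mw - min mw a := by
    rcases le_total mw a with h | h
    · simp [min_eq_left h, min_eq_left (hm.trans h)]
    · rcases le_total mu a with h2 | h2
      · simp [min_eq_left h2, min_eq_right h]; linarith
      · simp [min_eq_right h2, min_eq_right h]; linarith
  linarith
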